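/- For the xy-model Hamiltonian H on the torus (Fin ν → ZMod L) with on-site potential u : Λ → ℝ satisfying u x ≥ 0 for all x: the matrix H is positive semidefinite, and H · ψ₀ = 0, where ψ₀ ∈ E is the vector with ψ₀(σ) = 1 if σ is the all-zero (all-spin-down) configuration and ψ₀(σ) = 0 otherwise. In particular the ground state energy of H is 0 and ψ₀ is a ground state. -/

import Mathlib

open scoped ComplexOrder

/-- Two sites of the discrete torus `Fin ν → ZMod L` are nearest neighbors if they differ by
`±1` in exactly one coordinate. -/
def IsNearestNeighbor {ν L : ℕ} (x y : Fin ν → ZMod L) : Prop :=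
  ∃ i : Fin ν, y = Function.update x i (x i + 1) ∨ y = Function.update x i (x i - 1)

/-- `τ` is obtained from `σ` by exchanging the distinct values `σ x ≠ σ y` at a
nearest-neighbor pair `(x, y)`. -/
def IsExchange {ν L : ℕ} (σ τ : (Fin ν → ZMod L) → Fin 2) : Prop :=
  ∃ x y : Fin ν → ZMod L, IsNearestNeighbor x y ∧ σ x ≠ σ y ∧
    τ = Function.update (Function.update σ x (σ y)) y (σ x)

open Classical in
/-- The xy-model Hamiltonian on the torus `Fin ν → ZMod L` with on-site potential `u`:
diagonal entry `Σ_{x : σ x = 1} (u x + 2ν)`, entry `-1` between configurations related by a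
nearest-neighbor exchange of distinct spins, and `0` otherwise. -/
noncomputable def xyHam (ν L : ℕ) [NeZero L] (u : (Fin ν → ZMod L) → ℝ) :
    Matrix ((Fin ν → ZMod L) → Fin 2) ((Fin ν → ZMod L) → Fin 2) ℂ :=
  fun σ τ =>
    if σ = τ then
      ((∑ x : Fin ν → ZMod L, if σ x = 1 then u x + 2 * ν else 0 : ℝ) : ℂ)
    else if IsExchange σ τ then -1 else 0

open Classical in
/-- The all-spin-down vector: `ψ₀(σ) = 1` exactly when `σ` is the all-zero configuration. -/
noncomputable def groundVec (ν L : ℕ) [NeZero L] : ((Fin ν → ZMod L) → Fin 2) → ℂ :=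
  fun σ => if σ = fun _ => 0 then 1 else 0


section XYAux
open Classical
variable {ν L : ℕ}

lemma isExchange_symm {σ τ : (Fin ν → ZMod L) → Fin 2} (h : IsExchange σ τ) : IsExchange τ σ := by
  obtain ⟨x, y, hnn, hne, rfl⟩ := h
  have hxy : x ≠ y := fun h => hne (congrArg σ h)
  have htx : Function.update (Function.update σ x (σ y)) y (σ x) x = σ y := by
    simp [Function.update_apply, hxy]
  have hty : Function.update (Function.update σ x (σ y)) y (σ x) y = σ x := by
    simp [Function.update_apply]
  refine ⟨x, y, hnn, ?_, ?_⟩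
  · rw [htx, hty]; exact hne.symm
  · funext z
    rcases eq_or_ne z y with rfl | hzy
    · simp [Function.update_apply, htx, hxy.symm, if_neg hxy]
    · rcases eq_or_ne z x with rfl | hzx
      · simp [Function.update_apply, hzy, hty]
      · simp [Function.update_apply, hzy, hzx]

lemma isExchange_ne {σ τ : (Fin ν → ZMod L) → Fin 2} (h : IsExchange σ τ) : σ ≠ τ := by
  obtain ⟨x, y, hnn, hne, rfl⟩ := h
  have hxy : x ≠ y := fun h => hne (congrArg σ h)
  intro h
  have := congrFun h y
  simp [Function.update_apply] at this
  exact hne this.symm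

lemma not_isExchange_zero {σ : (Fin ν → ZMod L) → Fin 2}
    (h : IsExchange σ (fun _ => 0)) : False := by
  obtain ⟨x, y, hnn, hne, heq⟩ := h
  have hxy : x ≠ y := fun h => hne (congrArg σ h)
  have h1 := congrFun heq.symm x
  have h2 := congrFun heq.symm y
  simp [Function.update_apply, hxy] at h1 h2
  exact hne (h2.trans h1.symm)

variable [NeZero L]

lemma swap_comm (σ : (Fin ν → ZMod L) → Fin 2) {x y : Fin ν → ZMod L} (hxy : x ≠ y) :
    Function.update (Function.update σ y (σ x)) x (σ y)
      = Function.update (Function.update σ x (σ y)) y (σ x) := by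
  funext z
  rcases eq_or_ne z x with rfl | hzx
  · simp [Function.update_apply, hxy, hxy.symm]
  · rcases eq_or_ne z y with rfl | hzy
    · simp [Function.update_apply, hxy, hxy.symm]
    · simp [Function.update_apply, hzx, hzy]

lemma card_exchange_le (σ : (Fin ν → ZMod L) → Fin 2) :
    (Finset.univ.filter fun τ => IsExchange σ τ).card ≤
      2 * ν * (Finset.univ.filter fun x => σ x = 1).card := by
  classical
  set g : ((Fin ν → ZMod L) × (Fin ν × Bool)) → ((Fin ν → ZMod L) → Fin 2) := fun p =>
    (Function.update (Function.update σ p.1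
      (σ (Function.update p.1 p.2.1 (p.1 p.2.1 + cond p.2.2 1 (-1)))))
      (Function.update p.1 p.2.1 (p.1 p.2.1 + cond p.2.2 1 (-1))) (σ p.1)) with hg
  have fin2 : ∀ a : Fin 2, a = 0 ∨ a = 1 := by decide
  have hsurj : Set.SurjOn g
      (((Finset.univ.filter fun x => σ x = 1) ×ˢ (Finset.univ : Finset (Fin ν × Bool)) :
        Finset _) : Set _)
      ((Finset.univ.filter fun τ => IsExchange σ τ : Finset _) : Set _) := by
    intro τ hτ
    simp only [Finset.coe_filter, Set.mem_setOf_eq] at hτ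
    obtain ⟨-, x, y, ⟨i, hy⟩, hne, rfl⟩ := hτ
    have hxy : x ≠ y := fun h => hne (congrArg σ h)
    rcases fin2 (σ x) with hx0 | hx1
    · -- σ x = 0, so σ y = 1 ; use (y, i, flipped sign)
      have hy1 : σ y = 1 := by
        rcases fin2 (σ y) with h | h
        · exact absurd (hx0.trans h.symm) hne
        · exact h
      rcases hy with hy | hy
      · refine ⟨(y, i, false), ?_, ?_⟩
        · simp [Finset.mem_coe, Finset.mem_product, hy1]
        · have hx : Function.update y i (y i + cond false 1 (-1)) = x := by
            funext j
            rcases eq_or_ne j i with rfl | hj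
            · simp [hy, add_assoc]
            · simp [Function.update_apply, hj, hy]
          simp only [hg, hx]
          exact swap_comm σ hxy
      · refine ⟨(y, i, true), ?_, ?_⟩
        · simp [Finset.mem_coe, Finset.mem_product, hy1]
        · have hx : Function.update y i (y i + cond true 1 (-1)) = x := by
            funext j
            rcases eq_or_ne j i with rfl | hj
            · simp [hy]
            · simp [Function.update_apply, hj, hy]
          simp only [hg, hx]
          exact swap_comm σ hxy
    · -- σ x = 1 ; use (x, i, sign)
      rcases hy with hy | hy
      · refine ⟨(x, i, true), by simp [Finset.mem_coe, Finset.mem_product, hx1], ?_⟩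
        simp only [hg, Bool.cond_true, ← hy]
      · refine ⟨(x, i, false), by simp [Finset.mem_coe, Finset.mem_product, hx1], ?_⟩
        simp only [hg, Bool.cond_false]
        rw [show x i + -1 = x i - 1 by ring, ← hy]
  have hcard := Finset.card_le_card_of_surjOn g hsurj
  calc (Finset.univ.filter fun τ => IsExchange σ τ).card
      ≤ _ := hcard
    _ = (Finset.univ.filter fun x => σ x = 1).card * (ν * 2) := by
        simp [Finset.card_product, Finset.card_univ]
    _ = 2 * ν * (Finset.univ.filter fun x => σ x = 1).card := by ring

end XYAux

set_option maxHeartbeats 1600000 in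
/-- For nonnegative on-site potential, the xy-model Hamiltonian is positive semidefinite and
annihilates the all-spin-down vector `ψ₀`; in particular the ground state energy is `0` and
`ψ₀` is a ground state. -/
theorem xy_model_ground_state
    (ν L : ℕ) (hν : 1 ≤ ν) [NeZero L] (hL : 3 ≤ L)
    (u : (Fin ν → ZMod L) → ℝ) (hu : ∀ x, 0 ≤ u x) :
    (xyHam ν L u).PosSemidef ∧ (xyHam ν L u).mulVec (groundVec ν L) = 0 := by
  classical
  set H := xyHam ν L u with hH
  set D : ((Fin ν → ZMod L) → Fin 2) → ℝ := fun σ => ∑ x : (Fin ν → ZMod L), if σ x = 1 then u x + 2 * ν else 0 with hD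
  have hdiag : ∀ σ, H σ σ = ((D σ : ℝ) : ℂ) := fun σ => by simp [hH, xyHam, hD]
  have hoff : ∀ σ τ, σ ≠ τ → H σ τ = if IsExchange σ τ then -1 else 0 := fun σ τ h => by
    simp [hH, xyHam, h]
  have hsy : ∀ σ τ, H σ τ = H τ σ := by
    intro σ τ
    rcases eq_or_ne σ τ with rfl | h
    · rfl
    · rw [hoff σ τ h, hoff τ σ h.symm]
      exact if_congr ⟨isExchange_symm, isExchange_symm⟩ rfl rfl
  have hreal : ∀ σ τ, (starRingEnd ℂ) (H σ τ) = H σ τ := by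
    intro σ τ
    rcases eq_or_ne σ τ with rfl | h
    · rw [hdiag]; exact Complex.conj_ofReal _
    · rw [hoff σ τ h]
      split <;> simp
  have hherm : H.IsHermitian := by
    ext σ τ
    rw [Matrix.conjTranspose_apply, Complex.star_def, hreal, hsy]
  refine ⟨Matrix.posSemidef_iff_dotProduct_mulVec.mpr ⟨hherm, ?_⟩, ?_⟩
  · intro ψ
    have hexpand : dotProduct (star ψ) (H.mulVec ψ)
        = ∑ σ : (Fin ν → ZMod L) → Fin 2, ∑ τ : (Fin ν → ZMod L) → Fin 2, (starRingEnd ℂ) (ψ σ) * (H σ τ * ψ τ) := by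
      simp [dotProduct, Matrix.mulVec, Finset.mul_sum, Complex.star_def, mul_assoc]
    set Q := ∑ σ : (Fin ν → ZMod L) → Fin 2, ∑ τ : (Fin ν → ZMod L) → Fin 2, (starRingEnd ℂ) (ψ σ) * (H σ τ * ψ τ) with hQ
    rw [hexpand, Complex.nonneg_iff]
    have hns : ∀ σ, (0:ℝ) ≤ Complex.normSq (ψ σ) := fun σ => Complex.normSq_nonneg _
    set ns : ((Fin ν → ZMod L) → Fin 2) → ℝ := fun σ => Complex.normSq (ψ σ) with hnsd
    set N : ((Fin ν → ZMod L) → Fin 2) → ℕ := fun σ => (Finset.univ.filter fun τ => IsExchange σ τ).card with hN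
    constructor
    · -- real part nonneg
      have hre : Q.re = ∑ σ : (Fin ν → ZMod L) → Fin 2, ∑ τ : (Fin ν → ZMod L) → Fin 2,
          ((starRingEnd ℂ) (ψ σ) * (H σ τ * ψ τ)).re := by
        rw [hQ, Complex.re_sum]
        exact Finset.sum_congr rfl fun σ _ => Complex.re_sum _ _
      have hterm : ∀ σ τ : (Fin ν → ZMod L) → Fin 2,
          ((if τ = σ then D σ * ns σ else 0) - (if IsExchange σ τ then (ns σ + ns τ)/2 else 0))
            ≤ ((starRingEnd ℂ) (ψ σ) * (H σ τ * ψ τ)).re := by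
        intro σ τ
        rcases eq_or_ne τ σ with rfl | hts
        · rw [if_pos rfl, if_neg (fun h => isExchange_ne h rfl), hdiag]
          have : (starRingEnd ℂ) (ψ τ) * (((D τ : ℝ):ℂ) * ψ τ)
              = ((D τ : ℝ):ℂ) * (ψ τ * (starRingEnd ℂ) (ψ τ)) := by ring
          rw [this, Complex.mul_conj]
          rw [← Complex.ofReal_mul]
          simp [hnsd]
        · rw [hoff σ τ (Ne.symm hts), if_neg hts]
          by_cases hex : IsExchange σ τ
          · rw [if_pos hex, if_pos hex]
            have h1 : ((starRingEnd ℂ) (ψ σ) * (-1 * ψ τ)).re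
                = -((starRingEnd ℂ) (ψ σ) * ψ τ).re := by
              rw [show (starRingEnd ℂ) (ψ σ) * (-1 * ψ τ) = -((starRingEnd ℂ) (ψ σ) * ψ τ) by ring]
              simp
            rw [h1, zero_sub, neg_le_neg_iff]
            have h2 : ((starRingEnd ℂ) (ψ σ) * ψ τ).re ≤ ‖ψ σ‖ * ‖ψ τ‖ := by
              calc ((starRingEnd ℂ) (ψ σ) * ψ τ).re ≤ ‖(starRingEnd ℂ) (ψ σ) * ψ τ‖ :=
                    Complex.re_le_norm _
                _ = ‖ψ σ‖ * ‖ψ τ‖ := by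
                    rw [norm_mul, Complex.norm_conj]
            have h3 : ‖ψ σ‖ * ‖ψ τ‖ ≤ (ns σ + ns τ)/2 := by
              have e1 : ns σ = ‖ψ σ‖^2 := by simp [hnsd, Complex.sq_norm]
              have e2 : ns τ = ‖ψ τ‖^2 := by simp [hnsd, Complex.sq_norm]
              nlinarith [sq_nonneg (‖ψ σ‖ - ‖ψ τ‖)]
            linarith
          · simp [if_neg hex]
      have hsum1 : ∑ σ : (Fin ν → ZMod L) → Fin 2, ∑ τ : (Fin ν → ZMod L) → Fin 2,
          ((if τ = σ then D σ * ns σ else 0) - (if IsExchange σ τ then (ns σ + ns τ)/2 else 0))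
          ≤ Q.re := by
        rw [hre]
        exact Finset.sum_le_sum fun σ _ => Finset.sum_le_sum fun τ _ => hterm σ τ
      have hdiagsum : ∀ σ : (Fin ν → ZMod L) → Fin 2,
          (∑ τ : (Fin ν → ZMod L) → Fin 2, if τ = σ then D σ * ns σ else 0) = D σ * ns σ := fun σ => by
        simp
      -- the exchange double sum
      have hB : (∑ σ : (Fin ν → ZMod L) → Fin 2, ∑ τ : (Fin ν → ZMod L) → Fin 2, if IsExchange σ τ then ns τ else 0)
          = ∑ σ : (Fin ν → ZMod L) → Fin 2, ∑ τ : (Fin ν → ZMod L) → Fin 2, if IsExchange σ τ then ns σ else 0 := by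
        rw [Finset.sum_comm]
        refine Finset.sum_congr rfl fun σ _ => Finset.sum_congr rfl fun τ _ => ?_
        exact if_congr ⟨isExchange_symm, isExchange_symm⟩ rfl rfl
      have hA : ∀ σ : (Fin ν → ZMod L) → Fin 2,
          (∑ τ : (Fin ν → ZMod L) → Fin 2, if IsExchange σ τ then ns σ else 0) = (N σ : ℝ) * ns σ := by
        intro σ
        rw [← Finset.sum_filter]
        simp [hN, Finset.sum_const, nsmul_eq_mul, mul_comm]
      have hexch : (∑ σ : (Fin ν → ZMod L) → Fin 2, ∑ τ : (Fin ν → ZMod L) → Fin 2,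
          if IsExchange σ τ then (ns σ + ns τ)/2 else 0)
          = ∑ σ : (Fin ν → ZMod L) → Fin 2, (N σ : ℝ) * ns σ := by
        have : ∀ σ τ : (Fin ν → ZMod L) → Fin 2, (if IsExchange σ τ then (ns σ + ns τ)/2 else 0)
            = (if IsExchange σ τ then ns σ else 0)/2 + (if IsExchange σ τ then ns τ else 0)/2 := by
          intro σ τ; split <;> ring
        simp_rw [this, Finset.sum_add_distrib, ← Finset.sum_div]
        rw [hB]
        simp_rw [hA]
        ring
      have hDN : ∀ σ : (Fin ν → ZMod L) → Fin 2, (N σ : ℝ) ≤ D σ := by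
        intro σ
        have h1 : (N σ : ℝ) ≤ 2 * ν * (Finset.univ.filter fun x => σ x = 1).card := by
          exact_mod_cast card_exchange_le σ
        have h2 : (2 * ν * ((Finset.univ.filter fun x => σ x = 1).card) : ℝ)
            = ∑ x : (Fin ν → ZMod L), if σ x = 1 then (2 * ν : ℝ) else 0 := by
          rw [← Finset.sum_filter, Finset.sum_const, nsmul_eq_mul]
          ring
        have h3 : (∑ x : (Fin ν → ZMod L), if σ x = 1 then (2 * ν : ℝ) else 0) ≤ D σ := by
          refine Finset.sum_le_sum fun x _ => ?_
          split
          · linarith [hu x]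
          · exact le_refl _
        linarith
      have hsplit : (∑ σ : (Fin ν → ZMod L) → Fin 2, ∑ τ : (Fin ν → ZMod L) → Fin 2,
          ((if τ = σ then D σ * ns σ else 0) - (if IsExchange σ τ then (ns σ + ns τ)/2 else 0)))
          = (∑ σ : (Fin ν → ZMod L) → Fin 2, D σ * ns σ) - ∑ σ : (Fin ν → ZMod L) → Fin 2, (N σ : ℝ) * ns σ := by
        rw [Finset.sum_congr rfl fun σ (_ : σ ∈ Finset.univ) =>
          (Finset.sum_sub_distrib (f := fun τ => if τ = σ then D σ * ns σ else 0)
            (g := fun τ => if IsExchange σ τ then (ns σ + ns τ)/2 else 0))]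
        rw [Finset.sum_sub_distrib, hexch,
          Finset.sum_congr rfl fun σ (_ : σ ∈ Finset.univ) => hdiagsum σ]
      have h0 : (∑ σ : (Fin ν → ZMod L) → Fin 2, (N σ : ℝ) * ns σ) ≤ ∑ σ : (Fin ν → ZMod L) → Fin 2, D σ * ns σ :=
        Finset.sum_le_sum fun σ _ => mul_le_mul_of_nonneg_right (hDN σ) (hns σ)
      calc (0:ℝ) ≤ (∑ σ : (Fin ν → ZMod L) → Fin 2, D σ * ns σ) - ∑ σ : (Fin ν → ZMod L) → Fin 2, (N σ : ℝ) * ns σ :=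
            sub_nonneg.mpr h0
        _ = _ := hsplit.symm
        _ ≤ Q.re := hsum1
    · -- imaginary part
      have hconj : (starRingEnd ℂ) Q = Q := by
        rw [hQ, map_sum]
        have : ∀ σ : (Fin ν → ZMod L) → Fin 2, (starRingEnd ℂ) (∑ τ : (Fin ν → ZMod L) → Fin 2,
            (starRingEnd ℂ) (ψ σ) * (H σ τ * ψ τ))
            = ∑ τ : (Fin ν → ZMod L) → Fin 2, (starRingEnd ℂ) (ψ τ) * (H τ σ * ψ σ) := by
          intro σ
          rw [map_sum]
          refine Finset.sum_congr rfl fun τ _ => ?_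
          rw [map_mul, map_mul, Complex.conj_conj, hreal, hsy σ τ]
          ring
        simp_rw [this]
        exact Finset.sum_comm
      exact (Complex.conj_eq_iff_im.mp hconj).symm
  · funext σ
    have hsum : H.mulVec (groundVec ν L) σ = H σ (fun _ => 0) := by
      simp only [Matrix.mulVec, dotProduct, groundVec, mul_ite, mul_one, mul_zero]
      rw [Finset.sum_ite_eq' Finset.univ (fun _ => 0) (fun τ => H σ τ)]
      simp
    rw [hsum, Pi.zero_apply]
    rcases eq_or_ne σ (fun _ => 0) with rfl | hσ
    · rw [hdiag]
      have : D (fun _ => (0 : Fin 2)) = 0 := by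
        simp [hD]
      simp [this]
    · rw [hoff _ _ hσ, if_neg (fun h => not_isExchange_zero h)]
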